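/- For every i ≥ 1, if α₁, …, α_i are the complex roots (with multiplicity) of the degree-i monic polynomial a_i(t), then ∏_{j=1}^{i} a_{i−1}(α_j) = (−1)^{i(i−1)/2}. -/

import Mathlib

open Polynomial

noncomputable def aSeq : ℕ → Polynomial ℂ
  | 0 => 1
  | 1 => X - 1
  | (k + 2) => (X - 2) * aSeq (k + 1) - aSeq k

lemma two_eq_C : (2 : Polynomial ℂ) = C 2 := (map_ofNat C 2).symm

lemma aSeq_spec : ∀ k, (aSeq k).Monic ∧ (aSeq k).natDegree = k
  | 0 => ⟨monic_one, natDegree_one⟩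
  | 1 => ⟨monic_X_sub_C 1, natDegree_X_sub_C 1⟩
  | (k + 2) => by
    obtain ⟨h1m, h1d⟩ := aSeq_spec (k + 1)
    obtain ⟨h0m, h0d⟩ := aSeq_spec k
    have hm : ((X - 2 : Polynomial ℂ) * aSeq (k + 1)).Monic := by
      rw [two_eq_C]; exact (monic_X_sub_C 2).mul h1m
    have hd : ((X - 2 : Polynomial ℂ) * aSeq (k + 1)).natDegree = k + 2 := by
      rw [two_eq_C, (monic_X_sub_C (2:ℂ)).natDegree_mul h1m, natDegree_X_sub_C, h1d]
      ring
    have hlt : (aSeq k).degree < ((X - 2 : Polynomial ℂ) * aSeq (k + 1)).degree := by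
      rw [degree_eq_natDegree h0m.ne_zero, degree_eq_natDegree hm.ne_zero, h0d, hd]
      exact_mod_cast Nat.lt_succ_of_lt (Nat.lt_succ_self k)
    constructor
    · show ((X - 2 : Polynomial ℂ) * aSeq (k + 1) - aSeq k).Monic
      exact hm.sub_of_left hlt
    · show ((X - 2 : Polynomial ℂ) * aSeq (k + 1) - aSeq k).natDegree = k + 2
      rw [← hd]
      apply natDegree_sub_eq_left_of_natDegree_lt
      rw [h0d, hd]; omega

lemma aSeq_monic (k : ℕ) : (aSeq k).Monic := (aSeq_spec k).1

lemma aSeq_natDegree (k : ℕ) : (aSeq k).natDegree = k := (aSeq_spec k).2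

lemma aSeq_card_roots (k : ℕ) : Multiset.card (aSeq k).roots = k := by
  conv_rhs => rw [← aSeq_natDegree k]
  exact splits_iff_card_roots.mp (IsAlgClosed.splits (aSeq k))

lemma aSeq_eval (k : ℕ) (x : ℂ) :
    (aSeq k).eval x = ((aSeq k).roots.map fun a => x - a).prod := by
  have := Splits.eval_eq_prod_roots (f := aSeq k) (IsAlgClosed.splits (aSeq k)) x
  rwa [(aSeq_monic k).leadingCoeff, one_mul] at this

/-- Symmetry of the resultant-like product. -/
lemma prod_swap (m n : ℕ) :
    ((aSeq m).roots.map fun α => (aSeq n).eval α).prod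
      = (-1) ^ (m * n) * ((aSeq n).roots.map fun β => (aSeq m).eval β).prod := by
  have L : ((aSeq m).roots.map fun α => (aSeq n).eval α).prod
      = ((aSeq m).roots.map fun α =>
          ((aSeq n).roots.map fun β => α - β).prod).prod := by
    congr 1; exact Multiset.map_congr rfl fun α _ => aSeq_eval n α
  rw [L, Multiset.prod_map_prod_map]
  have hswap : ∀ β : ℂ, ((aSeq m).roots.map fun α => α - β).prod
      = (-1) ^ m * ((aSeq m).roots.map fun α => β - α).prod := by
    intro β
    have : ((aSeq m).roots.map fun α => α - β)
        = ((aSeq m).roots.map fun α => β - α).map Neg.neg := by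
      rw [Multiset.map_map]; exact Multiset.map_congr rfl fun α _ => by simp
    rw [this, Multiset.prod_map_neg, Multiset.card_map, aSeq_card_roots]
  calc ((aSeq n).roots.map fun β => ((aSeq m).roots.map fun α => α - β).prod).prod
      = ((aSeq n).roots.map fun β =>
          (-1) ^ m * ((aSeq m).roots.map fun α => β - α).prod).prod := by
        congr 1; exact Multiset.map_congr rfl fun β _ => hswap β
    _ = (-1) ^ (m * n) *
          ((aSeq n).roots.map fun β => ((aSeq m).roots.map fun α => β - α).prod).prod := by
        rw [Multiset.prod_map_mul, Multiset.map_const', Multiset.prod_replicate,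
          aSeq_card_roots, ← pow_mul]
    _ = (-1) ^ (m * n) * ((aSeq n).roots.map fun β => (aSeq m).eval β).prod := by
        exact congrArg (((-1:ℂ)^(m*n)) * ·) (congrArg Multiset.prod (Multiset.map_congr rfl fun β _ => (aSeq_eval m β).symm))

theorem prod_a_pred_over_roots_a (i : ℕ) (hi : 1 ≤ i) :
    ((aSeq i).roots.map fun α => (aSeq (i - 1)).eval α).prod
      = (-1) ^ (i * (i - 1) / 2) := by
  induction i with
  | zero => omega
  | succ n ih =>
    rcases Nat.eq_or_lt_of_le hi with h | h
    · have : n = 0 := by omega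
      subst this
      simp [aSeq, Polynomial.roots_X_sub_C]
    · have hn : 1 ≤ n := by omega
      have key : ((aSeq (n+1)).roots.map fun α => (aSeq n).eval α).prod
          = (-1) ^ ((n+1) * n) *
            ((aSeq n).roots.map fun β => (aSeq (n+1)).eval β).prod :=
        prod_swap (n+1) n
      have step : ((aSeq n).roots.map fun β => (aSeq (n+1)).eval β).prod
          = (-1) ^ n * ((aSeq n).roots.map fun β => (aSeq (n-1)).eval β).prod := by
        have hmap : ((aSeq n).roots.map fun β => (aSeq (n+1)).eval β)
            = ((aSeq n).roots.map fun β => (aSeq (n-1)).eval β).map Neg.neg := by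
          rw [Multiset.map_map]
          refine Multiset.map_congr rfl fun β hβ => ?_
          have hroot : (aSeq n).eval β = 0 :=
            (mem_roots ((aSeq_monic n).ne_zero)).mp hβ
          obtain ⟨m, rfl⟩ : ∃ m, n = m + 1 := ⟨n - 1, by omega⟩
          show (aSeq (m + 2)).eval β = -(aSeq (m + 1 - 1)).eval β
          simp only [aSeq, Nat.add_sub_cancel, eval_sub, eval_mul]
          rw [hroot]; ring
        rw [hmap, Multiset.prod_map_neg, Multiset.card_map, aSeq_card_roots]
      rw [Nat.add_sub_cancel, key, step, ih hn, ← mul_assoc, ← pow_add, ← pow_add]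
      obtain ⟨m, rfl⟩ : ∃ m, n = m + 1 := ⟨n - 1, by omega⟩
      obtain ⟨a, ha⟩ : Even ((m + 1) * (m + 1 - 1)) := by
        simpa [Nat.add_sub_cancel, mul_comm] using Nat.even_mul_succ_self m
      obtain ⟨b, hb⟩ : Even ((m + 1 + 1) * (m + 1)) := by
        simpa [mul_comm] using Nat.even_mul_succ_self (m + 1)
      have hBA : (m + 1 + 1) * (m + 1) = (m + 1) * (m + 1 - 1) + 2 * (m + 1) := by
        simp [Nat.add_sub_cancel]; ring
      rcases Nat.even_or_odd ((m + 1 + 1) * (m + 1) + (m + 1) + (m + 1) * (m + 1 - 1) / 2)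
        with he | ho
      · have he2 := Nat.even_iff.mp he
        rw [he.neg_one_pow,
          (Nat.even_iff.mpr (by omega : ((m+1+1)*(m+1)/2) % 2 = 0)).neg_one_pow]
      · have ho2 := Nat.odd_iff.mp ho
        rw [ho.neg_one_pow,
          (Nat.odd_iff.mpr (by omega : ((m+1+1)*(m+1)/2) % 2 = 1)).neg_one_pow]
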